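/- Let $\epsilon > 0$, $k_0 \in \mathbb{N}$, and suppose $1 + 4\pi^2 k^2 - \epsilon(2 + 4\pi^2(j^2+l^2)) \neq 0$ for all integers $j, l, k$ with $|j|,|l| \le k_0$ and $j + l = k$. Given initial data $(v_j(0))_{|j| \le k_0}$, define $v_k(t) = e^{-(1+4\pi^2k^2)t} v_k(0)$ and $u_k(t) = \sum_{j,l:\, |j|,|l| \le k_0,\, j+l=k} e^{-(2+4\pi^2(j^2+l^2))t} \frac{v_j(0) v_l(0)}{1 + 4\pi^2 k^2 - \epsilon(2 + 4\pi^2(j^2+l^2))}$. Then for every $t \in \mathbb{R}$ and every $k$, $(u_k, v_k)$ satisfies $\epsilon u_k'(t) = -(1 + 4\pi^2 k^2) u_k(t) + \sum_{j,l:\,|j|,|l| \le k_0,\, j+l=k} v_j(t) v_l(t)$ and $v_k'(t) = -(1+4\pi^2k^2) v_k(t)$. -/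

import Mathlib

open Real

/-- The explicit graph formula defines an invariant manifold for the Galerkin
truncation of the fast-slow system: the explicitly given `(u_k, v_k)` solve
`ε u_k' = -(1+4π²k²) u_k + ∑_{j+l=k} v_j v_l` and `v_k' = -(1+4π²k²) v_k`
for all times. -/
theorem stmt_6 (ε : ℝ) (hε : 0 < ε) (k0 : ℕ) (v0 : ℤ → ℝ)
    (hres : ∀ j l k : ℤ, |j| ≤ (k0 : ℤ) → |l| ≤ (k0 : ℤ) → j + l = k →
      1 + 4 * π ^ 2 * (k : ℝ) ^ 2 - ε * (2 + 4 * π ^ 2 * ((j : ℝ) ^ 2 + (l : ℝ) ^ 2)) ≠ 0)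
    (v : ℤ → ℝ → ℝ)
    (hv : ∀ k t, v k t = Real.exp (-(1 + 4 * π ^ 2 * (k : ℝ) ^ 2) * t) * v0 k)
    (u : ℤ → ℝ → ℝ)
    (hu : ∀ k t, u k t =
      ∑ p ∈ ((Finset.Icc (-(k0 : ℤ)) (k0 : ℤ)) ×ˢ (Finset.Icc (-(k0 : ℤ)) (k0 : ℤ))).filter
          (fun p => p.1 + p.2 = k),
        Real.exp (-(2 + 4 * π ^ 2 * ((p.1 : ℝ) ^ 2 + (p.2 : ℝ) ^ 2)) * t) *
          (v0 p.1 * v0 p.2 /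
            (1 + 4 * π ^ 2 * (k : ℝ) ^ 2 - ε * (2 + 4 * π ^ 2 * ((p.1 : ℝ) ^ 2 + (p.2 : ℝ) ^ 2))))) :
    ∀ (t : ℝ) (k : ℤ),
      HasDerivAt (u k)
        (ε⁻¹ * (-(1 + 4 * π ^ 2 * (k : ℝ) ^ 2) * u k t +
          ∑ p ∈ ((Finset.Icc (-(k0 : ℤ)) (k0 : ℤ)) ×ˢ (Finset.Icc (-(k0 : ℤ)) (k0 : ℤ))).filter
              (fun p => p.1 + p.2 = k),
            v p.1 t * v p.2 t)) t ∧
      HasDerivAt (v k) (-(1 + 4 * π ^ 2 * (k : ℝ) ^ 2) * v k t) t := by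
  intro t k
  set S := ((Finset.Icc (-(k0 : ℤ)) (k0 : ℤ)) ×ˢ (Finset.Icc (-(k0 : ℤ)) (k0 : ℤ))).filter
      (fun p : ℤ × ℤ => p.1 + p.2 = k) with hS
  constructor
  · have hfun : u k = fun s =>
        ∑ p ∈ S, Real.exp (-(2 + 4 * π ^ 2 * ((p.1 : ℝ) ^ 2 + (p.2 : ℝ) ^ 2)) * s) *
          (v0 p.1 * v0 p.2 /
            (1 + 4 * π ^ 2 * (k : ℝ) ^ 2 - ε * (2 + 4 * π ^ 2 * ((p.1 : ℝ) ^ 2 + (p.2 : ℝ) ^ 2)))) :=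
      funext (hu k)
    rw [hfun]
    have hd : HasDerivAt (fun s =>
        ∑ p ∈ S, Real.exp (-(2 + 4 * π ^ 2 * ((p.1 : ℝ) ^ 2 + (p.2 : ℝ) ^ 2)) * s) *
          (v0 p.1 * v0 p.2 /
            (1 + 4 * π ^ 2 * (k : ℝ) ^ 2 - ε * (2 + 4 * π ^ 2 * ((p.1 : ℝ) ^ 2 + (p.2 : ℝ) ^ 2)))))
        (∑ p ∈ S,
          (Real.exp (-(2 + 4 * π ^ 2 * ((p.1 : ℝ) ^ 2 + (p.2 : ℝ) ^ 2)) * t) *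
            (-(2 + 4 * π ^ 2 * ((p.1 : ℝ) ^ 2 + (p.2 : ℝ) ^ 2)) * 1)) *
          (v0 p.1 * v0 p.2 /
            (1 + 4 * π ^ 2 * (k : ℝ) ^ 2 - ε * (2 + 4 * π ^ 2 * ((p.1 : ℝ) ^ 2 + (p.2 : ℝ) ^ 2))))) t := by
      refine HasDerivAt.fun_sum fun p hp => ?_
      exact (((hasDerivAt_id t).const_mul
        (-(2 + 4 * π ^ 2 * ((p.1 : ℝ) ^ 2 + (p.2 : ℝ) ^ 2)))).exp).mul_const _
    convert hd using 1
    beta_reduce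
    rw [Finset.mul_sum, ← Finset.sum_add_distrib, Finset.mul_sum]
    refine Finset.sum_congr rfl fun p hp => ?_
    have hmem := Finset.mem_filter.mp hp
    have hprod := Finset.mem_product.mp hmem.1
    have hj : |p.1| ≤ (k0 : ℤ) := abs_le.mpr (Finset.mem_Icc.mp hprod.1)
    have hl : |p.2| ≤ (k0 : ℤ) := abs_le.mpr (Finset.mem_Icc.mp hprod.2)
    have hD := hres p.1 p.2 k hj hl hmem.2
    rw [hv, hv]
    have hE : Real.exp (-(1 + 4 * π ^ 2 * (p.1 : ℝ) ^ 2) * t) *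
        Real.exp (-(1 + 4 * π ^ 2 * (p.2 : ℝ) ^ 2) * t) =
        Real.exp (-(2 + 4 * π ^ 2 * ((p.1 : ℝ) ^ 2 + (p.2 : ℝ) ^ 2)) * t) := by
      rw [← Real.exp_add]; ring_nf
    have hε' : ε ≠ 0 := ne_of_gt hε
    have hE2 : Real.exp (-(1 + 4 * π ^ 2 * (p.1 : ℝ) ^ 2) * t) * v0 p.1 *
        (Real.exp (-(1 + 4 * π ^ 2 * (p.2 : ℝ) ^ 2) * t) * v0 p.2) =
        Real.exp (-(2 + 4 * π ^ 2 * ((p.1 : ℝ) ^ 2 + (p.2 : ℝ) ^ 2)) * t) * (v0 p.1 * v0 p.2) := by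
      rw [← hE]; ring
    rw [hE2]
    field_simp
    ring
  · have hfun : v k = fun s => Real.exp (-(1 + 4 * π ^ 2 * (k : ℝ) ^ 2) * s) * v0 k :=
      funext (hv k)
    rw [hfun]
    have := (((hasDerivAt_id t).const_mul (-(1 + 4 * π ^ 2 * (k : ℝ) ^ 2))).exp).mul_const (v0 k)
    refine this.congr_deriv ?_
    simp only [id_eq]
    ring
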